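/- Let M₁ : Xⁿ → (distributions over ℛ₁) be (ε₁,δ₁)-differentially private, and let M₂ : Xⁿ × ℛ₁ → (distributions over ℛ₂) be such that for every fixed r ∈ ℛ₁ the algorithm S ↦ M₂(S, r) is (ε₂,δ₂)-differentially private. Then the adaptive composition M(S) defined by sampling r ← M₁(S) and outputting a sample from M₂(S, r) is (ε₁+ε₂, δ₁+δ₂)-differentially private. -/

import Mathlib

open MeasureTheory ENNReal


/-- Two datasets in `Xⁿ` are neighbors if they differ in at most one entry. -/
def Neighboring {X : Type*} {n : ℕ} (S S' : Fin n → X) : Prop :=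
  ∃ i : Fin n, ∀ j : Fin n, j ≠ i → S j = S' j

/-- A randomized algorithm `M` from `Xⁿ` to distributions over `ℛ` is
`(ε,δ)`-differentially private if for all neighboring `S, S'` and all `T ⊆ ℛ`,
`Pr[M(S) ∈ T] ≤ e^ε · Pr[M(S') ∈ T] + δ`. -/
def DiffPrivate {X : Type*} {n : ℕ} {R : Type*} (M : (Fin n → X) → PMF R)
    (ε δ : ℝ) : Prop :=
  ∀ S S' : Fin n → X, Neighboring S S' → ∀ T : Set R,
    (M S).toOuterMeasure T ≤
      ENNReal.ofReal (Real.exp ε) * (M S').toOuterMeasure T + ENNReal.ofReal δ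

/-- **Basic composition (Lemma 2.7).** If `M₁ : Xⁿ → Δ(ℛ₁)` is `(ε₁,δ₁)`-differentially
private and `M₂ : Xⁿ × ℛ₁ → Δ(ℛ₂)` is `(ε₂,δ₂)`-differentially private for every fixed
value of its second argument, then the adaptive composition
`M(S) = M₂(S, M₁(S))` (monadic bind) is `(ε₁+ε₂, δ₁+δ₂)`-differentially private. -/
private lemma pmf_layercake {R : Type*} [Countable R] (P : PMF R) (f : R → ℝ≥0∞)
    (hf : ∀ r, f r ≤ 1) :
    ∑' r, P r * f r
      = ∫⁻ t in Set.Ico (0:ℝ) 1,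
          P.toOuterMeasure {r | ENNReal.ofReal t < f r} := by
  have hmeas : ∀ r : R, MeasurableSet {t : ℝ | ENNReal.ofReal t < f r} := by
    intro r
    exact ENNReal.measurable_ofReal measurableSet_Iio
  have key : ∀ r : R, P r * f r
      = ∫⁻ t in Set.Ico (0:ℝ) 1,
          Set.indicator {t : ℝ | ENNReal.ofReal t < f r} (fun _ => P r) t := by
    intro r
    rw [lintegral_indicator_const (hmeas r), Measure.restrict_apply (hmeas r)]
    have hne : f r ≠ ⊤ := (lt_of_le_of_lt (hf r) ENNReal.one_lt_top).ne
    have hset : {t : ℝ | ENNReal.ofReal t < f r} ∩ Set.Ico (0:ℝ) 1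
        = Set.Ico (0:ℝ) (f r).toReal := by
      ext t
      simp only [Set.mem_inter_iff, Set.mem_setOf_eq, Set.mem_Ico]
      constructor
      · rintro ⟨h1, h2, h3⟩
        exact ⟨h2, (ENNReal.ofReal_lt_iff_lt_toReal h2 hne).mp h1⟩
      · rintro ⟨h2, h3⟩
        refine ⟨(ENNReal.ofReal_lt_iff_lt_toReal h2 hne).mpr h3, h2, ?_⟩
        have : (f r).toReal ≤ 1 := by
          simpa using ENNReal.toReal_mono ENNReal.one_ne_top (hf r)
        linarith
    rw [hset, Real.volume_Ico, sub_zero, ENNReal.ofReal_toReal hne]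
  calc ∑' r, P r * f r
      = ∑' r, ∫⁻ t in Set.Ico (0:ℝ) 1,
          Set.indicator {t : ℝ | ENNReal.ofReal t < f r} (fun _ => P r) t :=
        tsum_congr key
    _ = ∫⁻ t in Set.Ico (0:ℝ) 1, ∑' r,
          Set.indicator {t : ℝ | ENNReal.ofReal t < f r} (fun _ => P r) t := by
        rw [← lintegral_tsum]
        intro r
        exact ((measurable_const).indicator (hmeas r)).aemeasurable
    _ = ∫⁻ t in Set.Ico (0:ℝ) 1,
          P.toOuterMeasure {r | ENNReal.ofReal t < f r} := by
        refine lintegral_congr fun t => ?_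
        rw [PMF.toOuterMeasure_apply]
        refine tsum_congr fun r => ?_
        simp [Set.indicator_apply]

private lemma exp_dp {R : Type*} [Countable R] (P P' : PMF R) (ε δ : ℝ) (hδ : 0 ≤ δ)
    (h : ∀ T : Set R, P.toOuterMeasure T ≤
      ENNReal.ofReal (Real.exp ε) * P'.toOuterMeasure T + ENNReal.ofReal δ)
    (f : R → ℝ≥0∞) (hf : ∀ r, f r ≤ 1) :
    ∑' r, P r * f r ≤
      ENNReal.ofReal (Real.exp ε) * ∑' r, P' r * f r + ENNReal.ofReal δ := by
  rw [pmf_layercake P f hf, pmf_layercake P' f hf]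
  calc ∫⁻ t in Set.Ico (0:ℝ) 1, P.toOuterMeasure {r | ENNReal.ofReal t < f r}
      ≤ ∫⁻ t in Set.Ico (0:ℝ) 1,
          (ENNReal.ofReal (Real.exp ε) * P'.toOuterMeasure {r | ENNReal.ofReal t < f r}
            + ENNReal.ofReal δ) :=
        lintegral_mono fun t => h _
    _ = (ENNReal.ofReal (Real.exp ε)
          * ∫⁻ t in Set.Ico (0:ℝ) 1, P'.toOuterMeasure {r | ENNReal.ofReal t < f r})
          + ENNReal.ofReal δ := by
        rw [lintegral_add_right _ measurable_const, lintegral_const,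
          lintegral_const_mul' _ _ ENNReal.ofReal_ne_top]
        simp [Real.volume_Ico]

theorem stmt_5 (X : Type*) (n : ℕ) (R₁ R₂ : Type*) [Countable R₁] [Countable R₂]
    (ε₁ δ₁ ε₂ δ₂ : ℝ) (hε₁ : 0 ≤ ε₁) (hδ₁ : 0 ≤ δ₁) (hε₂ : 0 ≤ ε₂) (hδ₂ : 0 ≤ δ₂)
    (M₁ : (Fin n → X) → PMF R₁) (M₂ : (Fin n → X) → R₁ → PMF R₂)
    (h₁ : DiffPrivate M₁ ε₁ δ₁)
    (h₂ : ∀ r : R₁, DiffPrivate (fun S => M₂ S r) ε₂ δ₂) :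
    DiffPrivate (fun S => (M₁ S).bind (M₂ S)) (ε₁ + ε₂) (δ₁ + δ₂) := by
  intro S S' hSS' T
  simp only [PMF.toOuterMeasure_bind_apply]
  set f : R₁ → ℝ≥0∞ :=
    fun r => min 1 (ENNReal.ofReal (Real.exp ε₂) * (M₂ S' r).toOuterMeasure T) with hf_def
  have houter_le_one : ∀ (r : R₁) (S₀ : Fin n → X), (M₂ S₀ r).toOuterMeasure T ≤ 1 := by
    intro r S₀
    rw [PMF.toOuterMeasure_apply]
    calc ∑' b, T.indicator (M₂ S₀ r) b ≤ ∑' b, (M₂ S₀ r) b :=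
          ENNReal.tsum_le_tsum fun b => Set.indicator_le_self _ _ _
      _ = 1 := (M₂ S₀ r).tsum_coe
  have hf_le_one : ∀ r, f r ≤ 1 := fun r => min_le_left _ _
  have step1 : ∀ r : R₁, (M₂ S r).toOuterMeasure T ≤ f r + ENNReal.ofReal δ₂ := by
    intro r
    have h2r := h₂ r S S' hSS' T
    rcases le_total (1 : ℝ≥0∞)
        (ENNReal.ofReal (Real.exp ε₂) * (M₂ S' r).toOuterMeasure T) with hc | hc
    · rw [hf_def]
      simp only [min_eq_left hc]
      exact le_add_right (houter_le_one r S)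
    · rw [hf_def]
      simp only [min_eq_right hc]
      exact h2r
  have step2 : ∑' r, M₁ S r * (M₂ S r).toOuterMeasure T
      ≤ (∑' r, M₁ S r * f r) + ENNReal.ofReal δ₂ := by
    calc ∑' r, M₁ S r * (M₂ S r).toOuterMeasure T
        ≤ ∑' r, M₁ S r * (f r + ENNReal.ofReal δ₂) :=
          ENNReal.tsum_le_tsum fun r => mul_le_mul_right (step1 r) _
      _ = (∑' r, M₁ S r * f r) + ∑' r, M₁ S r * ENNReal.ofReal δ₂ := by
          rw [← ENNReal.tsum_add]
          exact tsum_congr fun r => mul_add _ _ _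
      _ = (∑' r, M₁ S r * f r) + ENNReal.ofReal δ₂ := by
          rw [ENNReal.tsum_mul_right, (M₁ S).tsum_coe, one_mul]
  have step3 : ∑' r, M₁ S r * f r
      ≤ ENNReal.ofReal (Real.exp ε₁) * ∑' r, M₁ S' r * f r + ENNReal.ofReal δ₁ :=
    exp_dp (M₁ S) (M₁ S') ε₁ δ₁ hδ₁ (fun T' => h₁ S S' hSS' T') f hf_le_one
  have step4 : ∑' r, M₁ S' r * f r
      ≤ ENNReal.ofReal (Real.exp ε₂) * ∑' r, M₁ S' r * (M₂ S' r).toOuterMeasure T := by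
    rw [← ENNReal.tsum_mul_left]
    refine ENNReal.tsum_le_tsum fun r => ?_
    rw [← mul_assoc, mul_comm (ENNReal.ofReal (Real.exp ε₂)) (M₁ S' r), mul_assoc]
    exact mul_le_mul_right (min_le_right _ _) _
  calc ∑' r, M₁ S r * (M₂ S r).toOuterMeasure T
      ≤ (∑' r, M₁ S r * f r) + ENNReal.ofReal δ₂ := step2
    _ ≤ (ENNReal.ofReal (Real.exp ε₁) * ∑' r, M₁ S' r * f r + ENNReal.ofReal δ₁)
          + ENNReal.ofReal δ₂ := add_le_add_left step3 _
    _ ≤ (ENNReal.ofReal (Real.exp ε₁)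
          * (ENNReal.ofReal (Real.exp ε₂) * ∑' r, M₁ S' r * (M₂ S' r).toOuterMeasure T)
          + ENNReal.ofReal δ₁) + ENNReal.ofReal δ₂ := by
        gcongr
    _ = ENNReal.ofReal (Real.exp (ε₁ + ε₂))
          * ∑' r, M₁ S' r * (M₂ S' r).toOuterMeasure T
          + ENNReal.ofReal (δ₁ + δ₂) := by
        rw [Real.exp_add, ENNReal.ofReal_mul (Real.exp_nonneg ε₁),
          ENNReal.ofReal_add hδ₁ hδ₂, mul_assoc, add_assoc]
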